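/- For distinct transactions 1, 2 and a variable x, the valued history h3 = [wr_1(x,7), cmt_1, rd_2(x,3), cmt_2] is opaque under the conflict-based definition (i.e., the history obtained from h3 by erasing all values is opaque), but h3 is not value-opaque: every sequential legal history must order transaction 1 before transaction 2 (since 1 <_{h3} 2 and 1 is finished), and then the global read rd_2(x,3) would have to return the value 7 written by the last committed writer of x, not 3. -/

import Mathlib

/-- Statements of the conflict-based setting: reads, writes (without values),
commits and aborts, each tagged with a transaction identifier (a positive natural). -/
inductive Stmt : Type where
  | rd (t : ℕ+) (x : ℕ)
  | wr (t : ℕ+) (x : ℕ)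
  | cmt (t : ℕ+)
  | abrt (t : ℕ+)
  deriving DecidableEq

/-- The transaction identifier of a statement. -/
def Stmt.txn : Stmt → ℕ+
  | .rd t _ => t
  | .wr t _ => t
  | .cmt t => t
  | .abrt t => t

/-- The variable mentioned by a statement, if any. -/
def Stmt.var? : Stmt → Option ℕ
  | .rd _ x => some x
  | .wr _ x => some x
  | _ => none

/-- Projection of a history onto a transaction. -/
def proj (h : List Stmt) (t : ℕ+) : List Stmt :=
  h.filter (fun s => s.txn = t)

/-- Transaction `t` occurs in `h`. -/
def occurs (h : List Stmt) (t : ℕ+) : Prop := proj h t ≠ []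

/-- Transaction `t` is committing in `h`. -/
def committing (h : List Stmt) (t : ℕ+) : Prop :=
  (proj h t).getLast? = some (Stmt.cmt t)

/-- Transaction `t` is aborting in `h`. -/
def aborting (h : List Stmt) (t : ℕ+) : Prop :=
  (proj h t).getLast? = some (Stmt.abrt t)

/-- Transaction `t` is finished in `h`. -/
def finished (h : List Stmt) (t : ℕ+) : Prop :=
  committing h t ∨ aborting h t

/-- Transaction `t` is live in `h`: it occurs but is not finished. -/
def live (h : List Stmt) (t : ℕ+) : Prop := occurs h t ∧ ¬ finished h t

/-- `t1 <_h t2`: both occur and every statement of `t1` occurs strictly before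
every statement of `t2` (equivalently, the last statement of `t1` is before the
first statement of `t2`). -/
def precedes (h : List Stmt) (t1 t2 : ℕ+) : Prop :=
  occurs h t1 ∧ occurs h t2 ∧
  ∀ (i j : ℕ) (s1 s2 : Stmt), h[i]? = some s1 → h[j]? = some s2 →
    s1.txn = t1 → s2.txn = t2 → i < j

/-- A history is sequential if any two distinct occurring transactions are
comparable under `<_h`. -/
def sequential (h : List Stmt) : Prop :=
  ∀ t1 t2, t1 ≠ t2 → occurs h t1 → occurs h t2 →
    precedes h t1 t2 ∨ precedes h t2 t1

/-- Transaction `t` writes to variable `x` in `h`. -/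
def writes (h : List Stmt) (t : ℕ+) (x : ℕ) : Prop := Stmt.wr t x ∈ h

/-- The occurrence at position `i` in `h` is a global read `rd_t(x)`:
no `wr_t(x)` occurs before it. -/
def globalRead (h : List Stmt) (i : ℕ) (t : ℕ+) (x : ℕ) : Prop :=
  h[i]? = some (Stmt.rd t x) ∧ ∀ j, j < i → h[j]? ≠ some (Stmt.wr t x)

/-- The statement occurrences at positions `i` and `j` of `h` (belonging to
distinct transactions) are in conflict. -/
def conflict (h : List Stmt) (i j : ℕ) : Prop :=
  ∃ t1 t2, t1 ≠ t2 ∧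
    ((∃ x, globalRead h i t1 x ∧ h[j]? = some (Stmt.cmt t2) ∧ writes h t2 x) ∨
     (∃ x, globalRead h j t1 x ∧ h[i]? = some (Stmt.cmt t2) ∧ writes h t2 x) ∨
     (h[i]? = some (Stmt.cmt t1) ∧ h[j]? = some (Stmt.cmt t2) ∧
      ∃ x, writes h t1 x ∧ writes h t2 x))

/-- Position `i` of `h` and position `i'` of `h'` carry the same statement `s`,
and it is in both cases the same (`k`-th) occurrence of `s`. -/
def corresponds (h h' : List Stmt) (i i' : ℕ) : Prop :=
  ∃ s, h[i]? = some s ∧ h'[i']? = some s ∧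
    (h.take i).count s = (h'.take i').count s

/-- `h'` is strictly equivalent to `h`: it is a rearrangement with the same
per-transaction projections, preserving the real-time order of finished
transactions and the relative order of conflicting statement occurrences. -/
def strictEquiv (h h' : List Stmt) : Prop :=
  h.Perm h' ∧
  (∀ t, proj h t = proj h' t) ∧
  (∀ t1 t2, t1 ≠ t2 → precedes h t1 t2 → finished h t1 → precedes h' t1 t2) ∧
  (∀ i j i' j', i < j → conflict h i j →
     corresponds h h' i i' → corresponds h h' j j' → i' < j')

/-- A history is opaque if some sequential history is strictly equivalent to it. -/
def IsOpaque (h : List Stmt) : Prop :=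
  ∃ h', sequential h' ∧ strictEquiv h h'

/-- Statements of the value-based setting: reads and writes carry a value. -/
inductive VStmt : Type where
  | rd (t : ℕ+) (x : ℕ) (v : ℕ)
  | wr (t : ℕ+) (x : ℕ) (v : ℕ)
  | cmt (t : ℕ+)
  | abrt (t : ℕ+)
  deriving DecidableEq

/-- The transaction identifier of a valued statement. -/
def VStmt.txn : VStmt → ℕ+
  | .rd t _ _ => t
  | .wr t _ _ => t
  | .cmt t => t
  | .abrt t => t

/-- Erasing the value from a valued statement. -/
def VStmt.erase : VStmt → Stmt
  | .rd t x _ => Stmt.rd t x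
  | .wr t x _ => Stmt.wr t x
  | .cmt t => Stmt.cmt t
  | .abrt t => Stmt.abrt t

/-- Erasing all values from a valued history. -/
def eraseH (h : List VStmt) : List Stmt := h.map VStmt.erase

/-- Projection of a valued history onto a transaction. -/
def vProj (h : List VStmt) (t : ℕ+) : List VStmt :=
  h.filter (fun s => s.txn = t)

def vOccurs (h : List VStmt) (t : ℕ+) : Prop := vProj h t ≠ []

def vCommitting (h : List VStmt) (t : ℕ+) : Prop :=
  (vProj h t).getLast? = some (VStmt.cmt t)

def vAborting (h : List VStmt) (t : ℕ+) : Prop :=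
  (vProj h t).getLast? = some (VStmt.abrt t)

def vFinished (h : List VStmt) (t : ℕ+) : Prop :=
  vCommitting h t ∨ vAborting h t

def vPrecedes (h : List VStmt) (t1 t2 : ℕ+) : Prop :=
  vOccurs h t1 ∧ vOccurs h t2 ∧
  ∀ (i j : ℕ) (s1 s2 : VStmt), h[i]? = some s1 → h[j]? = some s2 →
    s1.txn = t1 → s2.txn = t2 → i < j

def vSequential (h : List VStmt) : Prop :=
  ∀ t1 t2, t1 ≠ t2 → vOccurs h t1 → vOccurs h t2 →
    vPrecedes h t1 t2 ∨ vPrecedes h t2 t1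

/-- Transaction `t` writes to `x` in the valued history `h`. -/
def vWrites (h : List VStmt) (t : ℕ+) (x : ℕ) : Prop :=
  ∃ v, VStmt.wr t x v ∈ h

/-- The occurrence at position `i` in `h` is a global read `rd_t(x,v)`. -/
def vGlobalRead (h : List VStmt) (i : ℕ) (t : ℕ+) (x : ℕ) (v : ℕ) : Prop :=
  h[i]? = some (VStmt.rd t x v) ∧ ∀ (j : ℕ) (v' : ℕ), j < i → h[j]? ≠ some (VStmt.wr t x v')

/-- The last write of transaction `t` to variable `x` in `h` has value `v`. -/
def lastWrite (h : List VStmt) (t : ℕ+) (x : ℕ) (v : ℕ) : Prop :=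
  ∃ i, h[i]? = some (VStmt.wr t x v) ∧
    ∀ (j : ℕ) (v' : ℕ), i < j → h[j]? ≠ some (VStmt.wr t x v')

/-- `t'` is a `<_h`-maximal committing transaction preceding `t` that writes to `x`. -/
def maxCommittingWriter (h : List VStmt) (t : ℕ+) (x : ℕ) (t' : ℕ+) : Prop :=
  vCommitting h t' ∧ vPrecedes h t' t ∧ vWrites h t' x ∧
  ∀ t'', vCommitting h t'' → vPrecedes h t'' t → vWrites h t'' x →
    t'' = t' ∨ vPrecedes h t'' t'

/-- A sequential valued history is legal: every global read `rd_t(x,v)` returns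
the value of the last write to `x` of the `<_h`-maximal committing transaction
preceding `t` writing to `x`, and `0` if no such transaction exists. -/
def vLegal (h : List VStmt) : Prop :=
  ∀ i t x v, vGlobalRead h i t x v →
    (∀ t', maxCommittingWriter h t x t' → ∀ v', lastWrite h t' x v' → v = v') ∧
    ((¬ ∃ t', vCommitting h t' ∧ vPrecedes h t' t ∧ vWrites h t' x) → v = 0)

/-- Value-equivalence of valued histories. -/
def valueEquiv (h h' : List VStmt) : Prop :=
  (∀ t, vProj h t = vProj h' t) ∧
  (∀ t1 t2, t1 ≠ t2 → vPrecedes h t1 t2 → vFinished h t1 → vPrecedes h' t1 t2)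

/-- A valued history is value-opaque if some sequential legal valued history is
value-equivalent to it. -/
def ValueOpaque (h : List VStmt) : Prop :=
  ∃ h', vSequential h' ∧ vLegal h' ∧ valueEquiv h h'

/-- The valued history `h3 = [wr_1(x,7), cmt_1, rd_2(x,3), cmt_2]` is opaque under
the conflict-based definition (after erasing values) but not value-opaque; indeed
every sequential valued history value-equivalent to `h3` must order transaction 1
before transaction 2. -/
-- Two distinct positions carrying the same element force count at least 2.
lemma two_le_count_of_two_getElem? {α : Type*} [DecidableEq α] {l : List α} {i j : ℕ} {a : α}
    (hij : i < j) (h1 : l[i]? = some a) (h2 : l[j]? = some a) : 2 ≤ l.count a := by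
  have hsplit : l = l.take (i+1) ++ l.drop (i+1) := (List.take_append_drop _ _).symm
  have hmem1 : a ∈ l.take (i+1) := by
    apply List.mem_of_getElem? (i := i)
    rwa [List.getElem?_take_of_lt (Nat.lt_succ_self i)]
  have hmem2 : a ∈ l.drop (i+1) := by
    apply List.mem_of_getElem? (i := j - (i+1))
    rw [List.getElem?_drop]
    rwa [Nat.add_sub_cancel' hij]
  calc 2 = 1 + 1 := rfl
    _ ≤ (l.take (i+1)).count a + (l.drop (i+1)).count a :=
        Nat.add_le_add (List.count_pos_iff.mpr hmem1) (List.count_pos_iff.mpr hmem2)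
    _ = l.count a := by rw [← List.count_append, ← hsplit]

theorem h3_conflict_opaque_not_value_opaque (x : ℕ) :
    let h3 : List VStmt := [VStmt.wr 1 x 7, VStmt.cmt 1, VStmt.rd 2 x 3, VStmt.cmt 2]
    IsOpaque (eraseH h3) ∧ ¬ ValueOpaque h3 ∧
    (∀ h', vSequential h' → vLegal h' → valueEquiv h3 h' → vPrecedes h' 1 2) := by
  intro h3
  have h21 : (2 : ℕ+) ≠ 1 := by decide
  have h12 : (1 : ℕ+) ≠ 2 := by decide
  -- computed projections of h3
  have hp1 : vProj h3 1 = [VStmt.wr 1 x 7, VStmt.cmt 1] := by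
    simp [vProj, h3, List.filter, VStmt.txn, h21]
  have hp2 : vProj h3 2 = [VStmt.rd 2 x 3, VStmt.cmt 2] := by
    simp [vProj, h3, List.filter, VStmt.txn, h12]
  have hpt : ∀ t : ℕ+, t ≠ 1 → t ≠ 2 → vProj h3 t = [] := by
    intro t ht1 ht2
    simp [vProj, h3, List.filter, VStmt.txn, Ne.symm ht1, Ne.symm ht2]
  -- h3 precedes
  have hprec : vPrecedes h3 1 2 := by
    refine ⟨by simp [vOccurs, hp1], by simp [vOccurs, hp2], ?_⟩
    intro i j s1 s2 hi hj ht1 ht2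
    have hi4 : i < 4 := by
      by_contra hc
      rw [List.getElem?_eq_none (by simpa [h3] using Nat.le_of_not_lt hc)] at hi
      exact nomatch hi
    have hj4 : j < 4 := by
      by_contra hc
      rw [List.getElem?_eq_none (by simpa [h3] using Nat.le_of_not_lt hc)] at hj
      exact nomatch hj
    interval_cases i <;> interval_cases j <;> try omega
    all_goals
      simp only [h3, List.getElem?_cons_zero, List.getElem?_cons_succ, List.getElem?_nil,
        Option.some.injEq] at hi hj
      subst hi; subst hj; simp [VStmt.txn] at ht1 ht2
  have hfin1 : vFinished h3 1 := Or.inl (by simp [vCommitting, hp1])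
  -- third conjunct
  have third : ∀ h', vSequential h' → vLegal h' → valueEquiv h3 h' → vPrecedes h' 1 2 := by
    intro h' _ _ hveq
    exact hveq.2 1 2 h12 hprec hfin1
  refine ⟨?_, ?_, third⟩
  · -- IsOpaque (eraseH h3)
    set e : List Stmt := [Stmt.wr 1 x, Stmt.cmt 1, Stmt.rd 2 x, Stmt.cmt 2] with he
    have heq : eraseH h3 = e := by simp [eraseH, h3, VStmt.erase, he]
    rw [heq]
    have hnodup : e.Nodup := by simp [he]
    have hocc : ∀ t : ℕ+, occurs e t → t = 1 ∨ t = 2 := by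
      intro t ht
      by_contra hc
      push_neg at hc
      apply ht
      simp [proj, he, List.filter, Stmt.txn, Ne.symm hc.1, Ne.symm hc.2]
    have hprec12 : precedes e 1 2 := by
      refine ⟨?_, ?_, ?_⟩
      · simp [occurs, proj, he, List.filter, Stmt.txn, h21]
      · simp [occurs, proj, he, List.filter, Stmt.txn, h12]
      intro i j s1 s2 hi hj ht1 ht2
      have hi4 : i < 4 := by
        by_contra hc
        rw [List.getElem?_eq_none (by simpa [he] using Nat.le_of_not_lt hc)] at hi
        exact nomatch hi
      have hj4 : j < 4 := by
        by_contra hc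
        rw [List.getElem?_eq_none (by simpa [he] using Nat.le_of_not_lt hc)] at hj
        exact nomatch hj
      interval_cases i <;> interval_cases j <;> try omega
      all_goals
        simp only [he, List.getElem?_cons_zero, List.getElem?_cons_succ, List.getElem?_nil,
          Option.some.injEq] at hi hj
        subst hi; subst hj; simp [Stmt.txn] at ht1 ht2
    have hseq : sequential e := by
      intro t1 t2 hne ho1 ho2
      rcases hocc t1 ho1 with h1 | h1 <;> rcases hocc t2 ho2 with h2 | h2 <;>
        subst h1 <;> subst h2
      · exact absurd rfl hne
      · exact Or.inl hprec12
      · exact Or.inr hprec12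
      · exact absurd rfl hne
    refine ⟨e, hseq, List.Perm.refl e, fun t => rfl, fun _ _ _ hp _ => hp, ?_⟩
    intro i j i' j' hij _ hci hcj
    obtain ⟨s, hsi, hsi', _⟩ := hci
    obtain ⟨u, hsj, hsj', _⟩ := hcj
    have hi' : i' < e.length := by
      by_contra hc
      rw [List.getElem?_eq_none (Nat.le_of_not_lt hc)] at hsi'
      exact nomatch hsi'
    have hj : j < e.length := by
      by_contra hc
      rw [List.getElem?_eq_none (Nat.le_of_not_lt hc)] at hsj
      exact nomatch hsj
    have : i' = i := (List.getElem?_inj hi' hnodup).mp (hsi'.trans hsi.symm)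
    have : j = j' := (List.getElem?_inj hj hnodup).mp (hsj.trans hsj'.symm)
    omega
  · -- not ValueOpaque
    rintro ⟨h', hseq, hleg, hveq⟩
    have hp : vPrecedes h' 1 2 := third h' hseq hleg hveq
    have hq1 : vProj h' 1 = [VStmt.wr 1 x 7, VStmt.cmt 1] := (hveq.1 1).symm.trans hp1
    have hq2 : vProj h' 2 = [VStmt.rd 2 x 3, VStmt.cmt 2] := (hveq.1 2).symm.trans hp2
    have hqt : ∀ t : ℕ+, t ≠ 1 → t ≠ 2 → vProj h' t = [] := fun t h1 h2 =>
      (hveq.1 t).symm.trans (hpt t h1 h2)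
    -- classify statements in h'
    have hclass : ∀ s : VStmt, s ∈ h' →
        (s = VStmt.wr 1 x 7 ∨ s = VStmt.cmt 1) ∨ (s = VStmt.rd 2 x 3 ∨ s = VStmt.cmt 2) := by
      intro s hs
      by_cases h1 : s.txn = 1
      · left
        have : s ∈ vProj h' 1 := List.mem_filter.mpr ⟨hs, by simp [h1]⟩
        rw [hq1] at this
        simpa using this
      by_cases h2 : s.txn = 2
      · right
        have : s ∈ vProj h' 2 := List.mem_filter.mpr ⟨hs, by simp [h2]⟩
        rw [hq2] at this
        simpa using this
      · exfalso
        have : s ∈ vProj h' s.txn := List.mem_filter.mpr ⟨hs, by simp⟩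
        rw [hqt s.txn h1 h2] at this
        exact List.not_mem_nil this
    have hwmem : VStmt.wr 1 x 7 ∈ h' := by
      have : VStmt.wr 1 x 7 ∈ vProj h' 1 := by rw [hq1]; simp
      exact List.mem_of_mem_filter this
    have hrmem : VStmt.rd 2 x 3 ∈ h' := by
      have : VStmt.rd 2 x 3 ∈ vProj h' 2 := by rw [hq2]; simp
      exact List.mem_of_mem_filter this
    obtain ⟨i, hi⟩ := List.mem_iff_getElem?.mp hrmem
    -- the read is a global read
    have hgr : vGlobalRead h' i 2 x 3 := by
      refine ⟨hi, ?_⟩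
      intro j v' _ hcon
      have hm : VStmt.wr 2 x v' ∈ h' := List.mem_of_getElem? hcon
      rcases hclass _ hm with (h | h) | (h | h) <;> simp [h21] at h
    obtain ⟨H1, _⟩ := hleg i 2 x 3 hgr
    -- transaction 1 is the max committing writer
    have hmax : maxCommittingWriter h' 2 x 1 := by
      refine ⟨by simp [vCommitting, hq1], hp, ⟨7, hwmem⟩, ?_⟩
      intro t'' _ _ hw
      obtain ⟨v, hv⟩ := hw
      rcases hclass _ hv with (h | h) | (h | h)
      · exact Or.inl (VStmt.wr.inj h).1
      all_goals exact absurd h (by simp)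
    -- the last write of 1 to x is 7
    obtain ⟨iw, hiw⟩ := List.mem_iff_getElem?.mp hwmem
    have hcount : h'.count (VStmt.wr 1 x 7) = 1 := by
      have : (vProj h' 1).count (VStmt.wr 1 x 7) = h'.count (VStmt.wr 1 x 7) := by
        simp [vProj, List.count_filter, VStmt.txn]
      rw [← this, hq1]
      simp [List.count_cons]
    have hlw : lastWrite h' 1 x 7 := by
      refine ⟨iw, hiw, ?_⟩
      intro j v' hij hcon
      have hm : VStmt.wr 1 x v' ∈ h' := List.mem_of_getElem? hcon
      have hv7 : v' = 7 := by
        rcases hclass _ hm with (h | h) | (h | h)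
        · exact (VStmt.wr.inj h).2.2
        all_goals exact absurd h (by simp)
      subst hv7
      have := two_le_count_of_two_getElem? hij hiw hcon
      omega
    have : (3 : ℕ) = 7 := H1 1 hmax 7 hlw
    exact absurd this (by norm_num)
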